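/- Let α > 0 and L̃ > 0, let H̃(z) = (tanh(z + L̃/2) − tanh(z − L̃/2))/(2·tanh(L̃/2)) and g_α(z) = tanh(α z/2). Then the limit lim_{z→+∞} H̃′(z)/g_α′(z) exists in ℝ if and only if α ≤ 2; moreover, if α < 2 the limit equals 0, and if α = 2 the limit equals (e^{−L̃} − e^{L̃})/(2·tanh(L̃/2)). (This is the transformation condition guaranteeing C¹-smoothness of the compactified system, and it holds precisely for α ∈ (0, 2].) -/

import Mathlib

open Filter

set_option maxHeartbeats 1000000 in
lemma alg2 (α u a w : ℝ) (hu0 : 0 < u) (ha0 : 0 < a) (hw0 : 0 < w) (ha1 : 1 < a) (hα : 0 < α) :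
    ((4*(u*a)^2/(u^2*a^2+1)^2 - 4*(u*a)^2/(u^2+a^2)^2) / (2*((a^2-1)/(a^2+1)))) /
      (4*w^2/(w^2+1)^2 * (α/2))
    = (w*w/(u*u)) * ((u^4*a^2/(u^2*a^2+1)^2 - a^2*u^4/(u^2+a^2)^2) *
        ((w^2+1)^2/w^4) / (α*((a^2-1)/(a^2+1)))) := by
  have n1 : a^2 - 1 ≠ 0 := by nlinarith
  have n2 : (0:ℝ) < a^2 + 1 := by positivity
  have n3 : (0:ℝ) < u^2*a^2+1 := by positivity
  have n4 : (0:ℝ) < u^2+a^2 := by positivity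
  have n5 : (0:ℝ) < w^2+1 := by positivity
  field_simp

lemma ratio_eq (α Lt z : ℝ) (hα : 0 < α) (hLt : 0 < Lt) :
    ((1 / Real.cosh (z + Lt/2) ^ 2 - 1 / Real.cosh (z - Lt/2) ^ 2) / (2 * Real.tanh (Lt/2))) /
      (1 / Real.cosh (α * z / 2) ^ 2 * (α / 2))
    = Real.exp ((α - 2) * z) *
      ((Real.exp (-Lt) / (1 + Real.exp (-(2*z + Lt)))^2 -
          Real.exp Lt / (1 + Real.exp (-(2*z - Lt)))^2) *
        (1 + Real.exp (-(α*z)))^2 / (α * Real.tanh (Lt/2))) := by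
  set u := Real.exp z with hu
  set a := Real.exp (Lt/2) with ha
  set w := Real.exp (α * z / 2) with hw
  have hu0 : 0 < u := Real.exp_pos z
  have ha0 : 0 < a := Real.exp_pos _
  have hw0 : 0 < w := Real.exp_pos _
  have ha1 : 1 < a := by
    rw [ha, ← Real.exp_zero]
    exact Real.exp_lt_exp.mpr (by linarith)
  have c1 : 1 / Real.cosh (z + Lt/2) ^ 2 = 4*(u*a)^2/(u^2*a^2+1)^2 := by
    rw [Real.cosh_eq, Real.exp_neg, Real.exp_add, ← hu, ← ha]
    rw [show (u * a + (u*a)⁻¹)/2 = (u^2*a^2+1)/(2*(u*a)) by field_simp]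
    rw [div_pow]
    rw [one_div_div]
    congr 1 <;> ring
  have c2 : 1 / Real.cosh (z - Lt/2) ^ 2 = 4*(u*a)^2/(u^2+a^2)^2 := by
    rw [Real.cosh_eq, Real.exp_neg, Real.exp_sub, ← hu, ← ha]
    rw [show (u / a + (u/a)⁻¹)/2 = (u^2+a^2)/(2*(u*a)) by field_simp]
    rw [div_pow, one_div_div]
    congr 1; ring
  have c3 : 1 / Real.cosh (α * z / 2) ^ 2 = 4*w^2/(w^2+1)^2 := by
    rw [Real.cosh_eq, Real.exp_neg, ← hw]
    rw [show (w + w⁻¹)/2 = (w^2+1)/(2*w) by field_simp]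
    rw [div_pow, one_div_div]
    congr 1; ring
  have c4 : Real.tanh (Lt/2) = (a^2-1)/(a^2+1) := by
    rw [Real.tanh_eq_sinh_div_cosh, Real.sinh_eq, Real.cosh_eq, Real.exp_neg, ← ha]
    have hne : a + a⁻¹ ≠ 0 := by positivity
    have hne2 : a ≠ 0 := ha0.ne'
    field_simp
  have c5 : Real.exp ((α - 2) * z) = w*w/(u*u) := by
    rw [show (α - 2) * z = (α*z/2 + α*z/2) - (z + z) by ring, Real.exp_sub, Real.exp_add,
      Real.exp_add, ← hu, ← hw]
  have eLt : Real.exp Lt = a * a := by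
    rw [ha, ← Real.exp_add]; congr 1; ring
  have c6 : Real.exp (-Lt) / (1 + Real.exp (-(2*z + Lt)))^2 = u^4*a^2/(u^2*a^2+1)^2 := by
    rw [Real.exp_neg, eLt, Real.exp_neg, show 2*z + Lt = (z + z) + Lt by ring,
      Real.exp_add, Real.exp_add, eLt, ← hu]
    rw [show (1 + (u*u*(a*a))⁻¹) = (u^2*a^2+1)/(u^2*a^2) by field_simp]
    rw [div_pow]
    field_simp [hu0.ne', ha0.ne']
  have c7 : Real.exp Lt / (1 + Real.exp (-(2*z - Lt)))^2 = a^2*u^4/(u^2+a^2)^2 := by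
    rw [show -(2*z - Lt) = Lt - (z + z) by ring, Real.exp_sub, Real.exp_add, eLt, ← hu]
    rw [show (1 + a*a/(u*u)) = (u^2+a^2)/u^2 by field_simp]
    rw [div_pow]
    field_simp [hu0.ne', ha0.ne']
  have c8 : (1 + Real.exp (-(α*z)))^2 = (w^2+1)^2/w^4 := by
    rw [Real.exp_neg, show α*z = α*z/2 + α*z/2 by ring, Real.exp_add, ← hw]
    rw [show (1 + (w*w)⁻¹) = (w^2+1)/w^2 by field_simp]
    rw [div_pow]
    congr 1; ring
  rw [c1, c2, c3, c4, c5, c6, c7, c8]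
  exact alg2 α u a w hu0 ha0 hw0 ha1 hα

noncomputable def Gfun (α Lt : ℝ) : ℝ → ℝ := fun z =>
  (Real.exp (-Lt) / (1 + Real.exp (-(2*z + Lt)))^2 -
      Real.exp Lt / (1 + Real.exp (-(2*z - Lt)))^2) *
    (1 + Real.exp (-(α*z)))^2 / (α * Real.tanh (Lt/2))

lemma Gfun_tendsto (α Lt : ℝ) (hα : 0 < α) (hLt : 0 < Lt) :
    Tendsto (Gfun α Lt) atTop
      (nhds ((Real.exp (-Lt) - Real.exp Lt) / (α * Real.tanh (Lt/2)))) := by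
  have h2z : Tendsto (fun z : ℝ => 2*z + Lt) atTop atTop :=
    tendsto_atTop_add_const_right _ Lt (tendsto_id.const_mul_atTop two_pos)
  have h2z' : Tendsto (fun z : ℝ => 2*z - Lt) atTop atTop := by
    simpa [sub_eq_add_neg] using
      tendsto_atTop_add_const_right _ (-Lt) (tendsto_id.const_mul_atTop (two_pos (α := ℝ)))
  have hαz : Tendsto (fun z : ℝ => α*z) atTop atTop := tendsto_id.const_mul_atTop hα
  have t1 : Tendsto (fun z : ℝ => Real.exp (-(2*z + Lt))) atTop (nhds 0) :=
    Real.tendsto_exp_atBot.comp (tendsto_neg_atTop_atBot.comp h2z)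
  have t2 : Tendsto (fun z : ℝ => Real.exp (-(2*z - Lt))) atTop (nhds 0) :=
    Real.tendsto_exp_atBot.comp (tendsto_neg_atTop_atBot.comp h2z')
  have t3 : Tendsto (fun z : ℝ => Real.exp (-(α*z))) atTop (nhds 0) :=
    Real.tendsto_exp_atBot.comp (tendsto_neg_atTop_atBot.comp hαz)
  have hd1 : Tendsto (fun z : ℝ => (1 + Real.exp (-(2*z + Lt)))^2) atTop (nhds 1) := by
    have : Tendsto (fun z : ℝ => ((1:ℝ) + Real.exp (-(2*z + Lt)))^2) atTop
        (nhds (((1:ℝ) + 0)^2)) := (tendsto_const_nhds.add t1).pow 2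
    simpa using this
  have hd2 : Tendsto (fun z : ℝ => (1 + Real.exp (-(2*z - Lt)))^2) atTop (nhds 1) := by
    have : Tendsto (fun z : ℝ => ((1:ℝ) + Real.exp (-(2*z - Lt)))^2) atTop
        (nhds (((1:ℝ) + 0)^2)) := (tendsto_const_nhds.add t2).pow 2
    simpa using this
  have hd3 : Tendsto (fun z : ℝ => (1 + Real.exp (-(α*z)))^2) atTop (nhds 1) := by
    have : Tendsto (fun z : ℝ => ((1:ℝ) + Real.exp (-(α*z)))^2) atTop
        (nhds (((1:ℝ) + 0)^2)) := (tendsto_const_nhds.add t3).pow 2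
    simpa using this
  have hA : Tendsto (fun z : ℝ => Real.exp (-Lt) / (1 + Real.exp (-(2*z + Lt)))^2)
      atTop (nhds (Real.exp (-Lt))) := by
    have := Tendsto.div
      (tendsto_const_nhds : Tendsto (fun _ : ℝ => Real.exp (-Lt)) atTop (nhds (Real.exp (-Lt))))
      hd1 one_ne_zero
    simp at this ⊢; exact this
  have hB : Tendsto (fun z : ℝ => Real.exp Lt / (1 + Real.exp (-(2*z - Lt)))^2)
      atTop (nhds (Real.exp Lt)) := by
    have := Tendsto.div
      (tendsto_const_nhds : Tendsto (fun _ : ℝ => Real.exp Lt) atTop (nhds (Real.exp Lt)))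
      hd2 one_ne_zero
    simp at this ⊢; exact this
  have := ((hA.sub hB).mul hd3).div_const (α * Real.tanh (Lt/2))
  rw [mul_one] at this
  exact this

/-- The transformation condition for `C¹`-smoothness of the compactified system:
the limit `lim_{z→+∞} H̃′(z)/g_α′(z)` exists in `ℝ` iff `α ≤ 2`; it equals `0`
when `α < 2`, and equals `(e^{−L̃} − e^{L̃})/(2 tanh(L̃/2))` when `α = 2`. -/
theorem transformation_condition (α Lt : ℝ) (hα : 0 < α) (hLt : 0 < Lt)
    (Ht : ℝ → ℝ)
    (hHt : ∀ z : ℝ,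
      Ht z = (Real.tanh (z + Lt / 2) - Real.tanh (z - Lt / 2)) / (2 * Real.tanh (Lt / 2)))
    (g : ℝ → ℝ) (hg : ∀ z : ℝ, g z = Real.tanh (α * z / 2)) :
    ((∃ l : ℝ, Tendsto (fun z : ℝ => deriv Ht z / deriv g z) atTop (nhds l)) ↔ α ≤ 2) ∧
    (α < 2 → Tendsto (fun z : ℝ => deriv Ht z / deriv g z) atTop (nhds 0)) ∧
    (α = 2 → Tendsto (fun z : ℝ => deriv Ht z / deriv g z) atTop
      (nhds ((Real.exp (-Lt) - Real.exp Lt) / (2 * Real.tanh (Lt / 2))))) := by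
  have hasDerivAt_tanh' : ∀ x : ℝ, HasDerivAt Real.tanh (1 / Real.cosh x ^ 2) x := by
    intro x
    have h : HasDerivAt (fun y => Real.sinh y / Real.cosh y)
        ((Real.cosh x * Real.cosh x - Real.sinh x * Real.sinh x) / Real.cosh x ^ 2) x :=
      (Real.hasDerivAt_sinh x).div (Real.hasDerivAt_cosh x) (Real.cosh_pos x).ne'
    have e : Real.cosh x * Real.cosh x - Real.sinh x * Real.sinh x = 1 := by
      nlinarith [Real.cosh_sq_sub_sinh_sq x]
    rw [e] at h
    have ht : Real.tanh = fun y => Real.sinh y / Real.cosh y := by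
      funext y; exact Real.tanh_eq_sinh_div_cosh y
    rw [ht]; exact h
  have hdH : ∀ z : ℝ, deriv Ht z =
      (1 / Real.cosh (z + Lt/2) ^ 2 - 1 / Real.cosh (z - Lt/2) ^ 2) / (2 * Real.tanh (Lt/2)) := by
    intro z
    have hH : Ht = fun z => (Real.tanh (z + Lt / 2) - Real.tanh (z - Lt / 2)) /
        (2 * Real.tanh (Lt / 2)) := funext hHt
    rw [hH]
    have h1 : HasDerivAt (fun y => Real.tanh (y + Lt/2)) (1 / Real.cosh (z + Lt/2) ^ 2) z := by
      have h := (hasDerivAt_tanh' (z + Lt/2)).comp z ((hasDerivAt_id z).add_const (Lt/2))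
      simp at h ⊢; exact h
    have h2 : HasDerivAt (fun y => Real.tanh (y - Lt/2)) (1 / Real.cosh (z - Lt/2) ^ 2) z := by
      have h := (hasDerivAt_tanh' (z - Lt/2)).comp z ((hasDerivAt_id z).sub_const (Lt/2))
      simp at h ⊢; exact h
    exact ((h1.sub h2).div_const _).deriv
  have hdg : ∀ z : ℝ, deriv g z = 1 / Real.cosh (α * z / 2) ^ 2 * (α / 2) := by
    intro z
    have hG : g = fun z => Real.tanh (α * z / 2) := funext hg
    rw [hG]
    have hin : HasDerivAt (fun y : ℝ => α * y / 2) (α / 2) z := by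
      simpa using ((hasDerivAt_id z).const_mul α).div_const 2
    exact ((hasDerivAt_tanh' (α * z / 2)).comp z hin).deriv
  have hratio : ∀ z : ℝ, deriv Ht z / deriv g z = Real.exp ((α - 2) * z) * Gfun α Lt z := by
    intro z
    rw [hdH z, hdg z]
    exact ratio_eq α Lt z hα hLt
  have hG := Gfun_tendsto α Lt hα hLt
  have htanh : 0 < Real.tanh (Lt/2) := by
    rw [Real.tanh_eq_sinh_div_cosh]
    exact div_pos (Real.sinh_pos_iff.mpr (by linarith)) (Real.cosh_pos _)
  have hc_neg : (Real.exp (-Lt) - Real.exp Lt) / (α * Real.tanh (Lt/2)) < 0 := by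
    apply div_neg_of_neg_of_pos
    · have : Real.exp (-Lt) < Real.exp Lt := Real.exp_lt_exp.mpr (by linarith)
      linarith
    · positivity
  have case_lt : α < 2 → Tendsto (fun z : ℝ => deriv Ht z / deriv g z) atTop (nhds 0) := by
    intro h
    have hexp : Tendsto (fun z : ℝ => Real.exp ((α - 2) * z)) atTop (nhds 0) :=
      Real.tendsto_exp_atBot.comp (tendsto_id.const_mul_atTop_of_neg (by linarith))
    have := hexp.mul hG
    rw [zero_mul] at this
    exact this.congr fun z => (hratio z).symm
  have case_eq : α = 2 → Tendsto (fun z : ℝ => deriv Ht z / deriv g z) atTop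
      (nhds ((Real.exp (-Lt) - Real.exp Lt) / (2 * Real.tanh (Lt/2)))) := by
    intro h
    subst h
    have h1 : Tendsto (fun z : ℝ => Real.exp (((2:ℝ) - 2) * z) * Gfun 2 Lt z) atTop
        (nhds ((Real.exp (-Lt) - Real.exp Lt) / (2 * Real.tanh (Lt/2)))) := by
      have h0 : ∀ z : ℝ, Real.exp (((2:ℝ) - 2) * z) * Gfun 2 Lt z = Gfun 2 Lt z := by
        intro z; norm_num
      exact (hG.congr fun z => (h0 z).symm)
    exact h1.congr fun z => (hratio z).symm
  have case_gt : 2 < α → Tendsto (fun z : ℝ => deriv Ht z / deriv g z) atTop atBot := by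
    intro h
    have hexp : Tendsto (fun z : ℝ => Real.exp ((α - 2) * z)) atTop atTop :=
      Real.tendsto_exp_atTop.comp (tendsto_id.const_mul_atTop (by linarith))
    have := hexp.atTop_mul_neg hc_neg hG
    exact this.congr fun z => (hratio z).symm
  refine ⟨⟨?_, ?_⟩, case_lt, case_eq⟩
  · rintro ⟨l, hl⟩
    by_contra hgt
    push_neg at hgt
    exact not_tendsto_nhds_of_tendsto_atBot (case_gt hgt) l hl
  · intro h
    rcases lt_or_eq_of_le h with h | h
    · exact ⟨0, case_lt h⟩
    · exact ⟨_, case_eq h⟩
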